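/- Given a bounded multiplicative Hankel operator M(α), the rule m**(I* a) := (α, a) = ∑_n α(n) a(n) for a ∈ ℓ²(ℕ+) extends to a well-defined element m** ∈ ℳ₀** with ‖m**‖ ≤ ‖M(α)‖ and I**(m**) = α. -/

import Mathlib

open scoped ComplexConjugate

set_option synthInstance.maxHeartbeats 1000000
set_option maxHeartbeats 1000000

noncomputable section

abbrev H := lp (fun _ : ℕ+ => ℂ) 2

/-- `T` is the multiplicative Hankel operator with matrix `{α(nm)}`. -/
def IsHankel (T : H →L[ℂ] H) (α : ℕ+ → ℂ) : Prop :=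
  ∀ n m : ℕ+, (T (lp.single 2 n 1) : ℕ+ → ℂ) m = α (n * m)

/-- The topological dual of a seminormed space `E` (`NormedSpace.Dual` of the older Mathlib,
now `StrongDual`), restored as a type synonym with its own instances. -/
def NormedSpace.Dual (𝕜 : Type*) [NontriviallyNormedField 𝕜] (E : Type*)
    [SeminormedAddCommGroup E] [NormedSpace 𝕜 E] : Type _ := E →L[𝕜] 𝕜

instance NormedSpace.Dual.instSeminormedAddCommGroup (𝕜 : Type*) [NontriviallyNormedField 𝕜]
    (E : Type*) [SeminormedAddCommGroup E] [NormedSpace 𝕜 E] :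
    SeminormedAddCommGroup (NormedSpace.Dual 𝕜 E) :=
  inferInstanceAs (SeminormedAddCommGroup (E →L[𝕜] 𝕜))

instance NormedSpace.Dual.instNormedSpace (𝕜 : Type*) [NontriviallyNormedField 𝕜]
    (E : Type*) [SeminormedAddCommGroup E] [NormedSpace 𝕜 E] :
    NormedSpace 𝕜 (NormedSpace.Dual 𝕜 E) :=
  inferInstanceAs (NormedSpace 𝕜 (E →L[𝕜] 𝕜))

instance NormedSpace.Dual.instFunLike (𝕜 : Type*) [NontriviallyNormedField 𝕜]
    (E : Type*) [SeminormedAddCommGroup E] [NormedSpace 𝕜 E] :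
    FunLike (NormedSpace.Dual 𝕜 E) E 𝕜 :=
  inferInstanceAs (FunLike (E →L[𝕜] 𝕜) E 𝕜)


namespace HankelAux

open Filter
open scoped ENNReal NNReal Topology

lemma two_toReal : (2 : ℝ≥0∞).toReal = 2 := by norm_num

lemma two_pos' : (0:ℝ) < (2 : ℝ≥0∞).toReal := by norm_num

lemma conj22 : (2 : ℝ≥0∞).toReal.HolderConjugate (2 : ℝ≥0∞).toReal := by
  rw [two_toReal]; exact Real.HolderConjugate.two_two

lemma normSummable (x a : H) : Summable fun n : ℕ+ => ‖x n * a n‖ := by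
  have := lp.summable_mul conj22 x a
  exact this.congr fun n => (norm_mul _ _).symm

lemma pairSummable (x a : H) : Summable fun n : ℕ+ => x n * a n :=
  (normSummable x a).of_norm

lemma lp_norm_le_of_le {f : H} {C : ℝ} {a : H} (hC : 0 ≤ C)
    (h : ∀ k, ‖f k‖ ≤ C * ‖a k‖) : ‖f‖ ≤ C * ‖a‖ := by
  refine lp.norm_le_of_forall_sum_le two_pos' (mul_nonneg hC (norm_nonneg _)) fun s => ?_
  have h1 : ∀ k ∈ s, ‖f k‖ ^ (2:ℝ≥0∞).toReal
      ≤ C ^ (2:ℝ≥0∞).toReal * ‖a k‖ ^ (2:ℝ≥0∞).toReal := by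
    intro k _
    rw [← Real.mul_rpow hC (norm_nonneg _)]
    exact Real.rpow_le_rpow (norm_nonneg _) (h k) two_pos'.le
  calc ∑ k ∈ s, ‖f k‖ ^ (2:ℝ≥0∞).toReal
      ≤ ∑ k ∈ s, C ^ (2:ℝ≥0∞).toReal * ‖a k‖ ^ (2:ℝ≥0∞).toReal := Finset.sum_le_sum h1
    _ = C ^ (2:ℝ≥0∞).toReal * ∑ k ∈ s, ‖a k‖ ^ (2:ℝ≥0∞).toReal := by rw [Finset.mul_sum]
    _ ≤ C ^ (2:ℝ≥0∞).toReal * ‖a‖ ^ (2:ℝ≥0∞).toReal := by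
        have := lp.sum_rpow_le_norm_rpow two_pos' a s
        exact mul_le_mul_of_nonneg_left this (Real.rpow_nonneg hC _)
    _ = (C * ‖a‖) ^ (2:ℝ≥0∞).toReal := (Real.mul_rpow hC (norm_nonneg _)).symm

lemma memℓp_pointwise {w : ℕ+ → ℂ} {C : ℝ} (hw : ∀ k, ‖w k‖ ≤ C) (a : H) :
    Memℓp (fun k => w k * a k) 2 := by
  have hC : 0 ≤ C := le_trans (norm_nonneg _) (hw 1)
  apply memℓp_gen
  have hs : Summable fun k : ℕ+ => C ^ (2:ℝ≥0∞).toReal * ‖a k‖ ^ (2:ℝ≥0∞).toReal :=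
    ((lp.memℓp a).summable two_pos').mul_left _
  refine hs.of_nonneg_of_le (fun k => Real.rpow_nonneg (norm_nonneg _) _) fun k => ?_
  rw [← Real.mul_rpow hC (norm_nonneg _)]
  refine Real.rpow_le_rpow (norm_nonneg _) ?_ two_pos'.le
  rw [norm_mul]
  exact mul_le_mul_of_nonneg_right (hw k) (norm_nonneg _)

/-- the diagonal operator with weight `w` bounded by `C`. -/
def diag (w : ℕ+ → ℂ) (C : ℝ) (hw : ∀ k, ‖w k‖ ≤ C) : H →L[ℂ] H :=
  LinearMap.mkContinuous
    { toFun := fun a => (⟨fun k => w k * a k, memℓp_pointwise hw a⟩ : lp _ 2)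
      map_add' := fun a b => lp.ext (funext fun k => by
        simp only [lp.coeFn_add, Pi.add_apply]
        change w k * (a k + b k) = w k * a k + w k * b k
        ring)
      map_smul' := fun c a => lp.ext (funext fun k => by
        simp only [lp.coeFn_smul, Pi.smul_apply, smul_eq_mul, RingHom.id_apply]
        change w k * (c * a k) = c * (w k * a k)
        ring) }
    C fun a => by
      have hC : 0 ≤ C := le_trans (norm_nonneg _) (hw 1)
      refine lp_norm_le_of_le hC fun k => ?_
      change ‖w k * a k‖ ≤ C * ‖a k‖
      rw [norm_mul]
      exact mul_le_mul_of_nonneg_right (hw k) (norm_nonneg _)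

lemma diag_apply (w : ℕ+ → ℂ) (C : ℝ) (hw : ∀ k, ‖w k‖ ≤ C) (a : H) (k : ℕ+) :
    (diag w C hw a : ℕ+ → ℂ) k = w k * a k := rfl



lemma isCompactOperator_smulRight (φ : H →L[ℂ] ℂ) (v : H) :
    IsCompactOperator ⇑(φ.smulRight v) := by
  refine ⟨(fun c : ℂ => c • v) '' Metric.closedBall 0 1, ?_, ?_⟩
  · exact (isCompact_closedBall (0:ℂ) 1).image (continuous_id.smul continuous_const)
  · have h1 : φ ⁻¹' Metric.closedBall 0 1 ∈ 𝓝 (0 : H) := by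
      have := φ.continuous.continuousAt (x := (0:H))
      have h2 : Metric.closedBall (0:ℂ) 1 ∈ 𝓝 (φ 0) := by
        rw [map_zero]
        exact Metric.closedBall_mem_nhds (0:ℂ) one_pos
      exact this.preimage_mem_nhds h2
    exact Filter.mem_of_superset h1 fun x hx => ⟨φ x, hx, rfl⟩

lemma single_one_apply (k m : ℕ+) :
    (lp.single 2 k (1:ℂ) : ℕ+ → ℂ) m = if m = k then 1 else 0 := by
  by_cases h : m = k
  · subst h; simp [lp.single_apply_self]
  · simp [lp.single_apply_ne 2 k _ h, h]



lemma coord_apply (k : ℕ+) (a : H) : (innerSL ℂ (lp.single 2 k (1:ℂ))) a = a k := by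
  change (inner ℂ (lp.single 2 k (1:ℂ)) a : ℂ) = a k
  rw [lp.inner_single_left]
  simp [RCLike.inner_apply]


lemma isCompactOperator_diag {w : ℕ+ → ℂ} {C : ℝ} (hw : ∀ k, ‖w k‖ ≤ C)
    (h0 : Tendsto w cofinite (𝓝 0)) : IsCompactOperator ⇑(diag w C hw) := by
  classical
  set A : Finset ℕ+ → (H →L[ℂ] H) := fun s =>
    ∑ k ∈ s, (innerSL ℂ (lp.single 2 k (1:ℂ))).smulRight (w k • lp.single 2 k (1:ℂ)) with hA
  have hAc : ∀ s, IsCompactOperator ⇑(A s) := by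
    intro s
    have : A s ∈ compactOperator (RingHom.id ℂ) H H :=
      Submodule.sum_mem _ fun k _ => isCompactOperator_smulRight _ _
    exact this
  have hAapp : ∀ (s : Finset ℕ+) (a : H) (m : ℕ+),
      (A s a : ℕ+ → ℂ) m = if m ∈ s then w m * a m else 0 := by
    intro s a m
    rw [hA]
    simp only [ContinuousLinearMap.sum_apply, lp.coeFn_sum, Finset.sum_apply,
      ContinuousLinearMap.smulRight_apply, coord_apply, lp.coeFn_smul, Pi.smul_apply,
      smul_eq_mul, single_one_apply, mul_ite, mul_one, mul_zero]
    rw [Finset.sum_ite_eq s m (fun k => a k * w k)]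
    by_cases hm : m ∈ s <;> simp [hm, mul_comm]
  have htend : Tendsto A atTop (𝓝 (diag w C hw)) := by
    rw [Metric.tendsto_atTop]
    intro ε hε
    have hev : {k : ℕ+ | ¬ ‖w k‖ < ε / 2}.Finite := by
      have h1 : ∀ᶠ k in cofinite, dist (w k) 0 < ε / 2 :=
        Metric.tendsto_nhds.mp h0 (ε/2) (by positivity)
      have h2 : ∀ᶠ k in cofinite, ‖w k‖ < ε / 2 := by
        simpa [dist_zero_right] using h1
      exact Filter.eventually_cofinite.mp h2
    refine ⟨hev.toFinset, fun s hs => ?_⟩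
    rw [dist_eq_norm]
    have hle : ‖A s - diag w C hw‖ ≤ ε / 2 := by
      refine ContinuousLinearMap.opNorm_le_bound _ (by positivity) fun a => ?_
      refine lp_norm_le_of_le (by positivity) fun m => ?_
      have : ((A s - diag w C hw) a : ℕ+ → ℂ) m = A s a m - (diag w C hw a : ℕ+ → ℂ) m := by
        rw [ContinuousLinearMap.sub_apply, lp.coeFn_sub]; rfl
      rw [this, hAapp, diag_apply]
      by_cases hm : m ∈ s
      · simp only [hm, if_pos, sub_self, norm_zero]
        positivity
      · have hm0 : ‖w m‖ < ε / 2 := by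
          by_contra hc
          exact hm (hs (hev.mem_toFinset.mpr hc))
        rw [if_neg hm, zero_sub, norm_neg, norm_mul]
        exact mul_le_mul_of_nonneg_right hm0.le (norm_nonneg _)
    linarith [hle]
  exact isCompactOperator_of_tendsto htend (Eventually.of_forall hAc)

open scoped ArithmeticFunction.Omega in
lemma smooth_le_pow (j : ℕ) : ∀ k : ℕ, k ≠ 0 →
    (∀ p : ℕ, p.Prime → p ∣ k → p ≤ j + 2) → k ≤ (j + 2) ^ (Ω k) := by
  intro k
  induction k using Nat.strong_induction_on with
  | _ k ih =>
    intro hk hsm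
    rcases eq_or_ne k 1 with rfl | hk1
    · simp
    · have hp : k.minFac.Prime := Nat.minFac_prime hk1
      have hdvd : k.minFac ∣ k := Nat.minFac_dvd k
      have hkq : k = k.minFac * (k / k.minFac) := (Nat.mul_div_cancel' hdvd).symm
      have hq0 : k / k.minFac ≠ 0 := by
        intro h
        rw [h, mul_zero] at hkq
        exact hk hkq
      have hqlt : k / k.minFac < k := Nat.div_lt_self (Nat.pos_of_ne_zero hk) hp.one_lt
      have hqsm : ∀ p : ℕ, p.Prime → p ∣ k / k.minFac → p ≤ j + 2 := fun p hp' hd =>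
        hsm p hp' (hd.trans (Nat.div_dvd_of_dvd hdvd))
      have hrec := ih _ hqlt hq0 hqsm
      have hΩ : Ω k = 1 + Ω (k / k.minFac) := by
        conv_lhs => rw [hkq]
        rw [ArithmeticFunction.cardFactors_mul hp.ne_zero hq0,
          ArithmeticFunction.cardFactors_apply_prime hp]
      calc k = k.minFac * (k / k.minFac) := hkq
        _ ≤ (j + 2) * (j + 2) ^ (Ω (k / k.minFac)) :=
            Nat.mul_le_mul (hsm _ hp hdvd) hrec
        _ = (j + 2) ^ (Ω k) := by rw [hΩ, pow_add, pow_one]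

/-- `k` is `(j+2)`-smooth. -/
def smoothP (j : ℕ) (k : ℕ+) : Prop := ∀ p : ℕ, p.Prime → p ∣ (k : ℕ) → p ≤ j + 2

open Classical in
/-- real weight -/
def wR (j : ℕ) (k : ℕ+) : ℝ :=
  if smoothP j k then (1 - ((j : ℝ) + 2)⁻¹) ^ (ArithmeticFunction.cardFactors (k : ℕ)) else 0

/-- complex weight -/
def wA (j : ℕ) (k : ℕ+) : ℂ := ((wR j k : ℝ) : ℂ)

lemma base_nonneg (j : ℕ) : (0:ℝ) ≤ 1 - ((j : ℝ) + 2)⁻¹ := by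
  have h2 : (1:ℝ) ≤ (j : ℝ) + 2 := by
    have : (0:ℝ) ≤ (j:ℝ) := Nat.cast_nonneg j
    linarith
  have := inv_le_one_of_one_le₀ h2
  linarith

lemma base_lt_one (j : ℕ) : 1 - ((j : ℝ) + 2)⁻¹ < 1 := by
  have : (0:ℝ) < ((j : ℝ) + 2)⁻¹ := by positivity
  linarith

lemma wR_nonneg (j : ℕ) (k : ℕ+) : 0 ≤ wR j k := by
  rw [wR]
  split
  · exact pow_nonneg (base_nonneg j) _
  · exact le_refl 0

lemma wR_le_one (j : ℕ) (k : ℕ+) : wR j k ≤ 1 := by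
  rw [wR]
  split
  · exact pow_le_one₀ (base_nonneg j) (by linarith [base_lt_one j])
  · norm_num

lemma wA_norm_le_one (j : ℕ) (k : ℕ+) : ‖wA j k‖ ≤ 1 := by
  rw [wA, Complex.norm_real, Real.norm_eq_abs, abs_of_nonneg (wR_nonneg j k)]
  exact wR_le_one j k

lemma smoothP_mul_iff (j : ℕ) (n m : ℕ+) :
    smoothP j (n * m) ↔ smoothP j n ∧ smoothP j m := by
  constructor
  · intro h
    constructor
    · intro p hp hd
      exact h p hp (by rw [PNat.mul_coe]; exact hd.mul_right _)
    · intro p hp hd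
      exact h p hp (by rw [PNat.mul_coe]; exact hd.mul_left _)
  · rintro ⟨h1, h2⟩ p hp hd
    rw [PNat.mul_coe] at hd
    rcases (Nat.Prime.dvd_mul hp).mp hd with h | h
    · exact h1 p hp h
    · exact h2 p hp h

lemma wA_mul (j : ℕ) (n m : ℕ+) : wA j (n * m) = wA j n * wA j m := by
  classical
  rw [wA, wA, wA, wR, wR, wR]
  by_cases h1 : smoothP j n
  · by_cases h2 : smoothP j m
    · rw [if_pos h1, if_pos h2, if_pos ((smoothP_mul_iff j n m).mpr ⟨h1, h2⟩)]
      have hc : ArithmeticFunction.cardFactors ((n * m : ℕ+) : ℕ)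
          = ArithmeticFunction.cardFactors (n : ℕ) + ArithmeticFunction.cardFactors (m : ℕ) := by
        rw [PNat.mul_coe]
        exact ArithmeticFunction.cardFactors_mul n.ne_zero m.ne_zero
      rw [hc, pow_add]
      push_cast
      ring
    · rw [if_neg h2, if_neg (fun hc => h2 ((smoothP_mul_iff j n m).mp hc).2)]
      simp
  · rw [if_neg h1, if_neg (fun hc => h1 ((smoothP_mul_iff j n m).mp hc).1)]
    simp

lemma wA_tendsto_cofinite (j : ℕ) : Filter.Tendsto (wA j) Filter.cofinite (𝓝 0) := by
  classical
  rw [Metric.tendsto_nhds]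
  intro ε hε
  rw [Filter.eventually_cofinite]
  have hbase0 : 0 ≤ 1 - ((j : ℝ) + 2)⁻¹ := base_nonneg j
  have hbase1 : 1 - ((j : ℝ) + 2)⁻¹ < 1 := base_lt_one j
  obtain ⟨N, hN⟩ : ∃ N : ℕ, (1 - ((j : ℝ) + 2)⁻¹) ^ N < ε := by
    have := tendsto_pow_atTop_nhds_zero_of_lt_one hbase0 hbase1
    have h2 := (Metric.tendsto_nhds.mp this) ε hε
    obtain ⟨N, hN⟩ := h2.exists
    exact ⟨N, by simpa [Real.dist_eq, abs_pow, abs_of_nonneg hbase0] using hN⟩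
  apply Set.Finite.subset (Set.Finite.preimage (f := fun k : ℕ+ => (k : ℕ))
    (Set.injOn_of_injective (fun a b hab => PNat.coe_injective hab))
    (Set.finite_Iic ((j + 2) ^ N)))
  intro k hk
  simp only [Set.mem_setOf_eq, not_lt] at hk
  have hsm : smoothP j k := by
    by_contra hs
    have h0 : wA j k = 0 := by simp [wA, wR, hs]
    rw [h0] at hk
    simp only [dist_self] at hk
    linarith
  have hval : dist (wA j k) 0 = (1 - ((j : ℝ) + 2)⁻¹) ^ (ArithmeticFunction.cardFactors (k:ℕ)) := by
    rw [dist_zero_right, wA, Complex.norm_real, Real.norm_eq_abs,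
      abs_of_nonneg (wR_nonneg j k), wR, if_pos hsm]
  have hΩ : ArithmeticFunction.cardFactors (k : ℕ) < N := by
    by_contra hc
    push_neg at hc
    have : (1 - ((j : ℝ) + 2)⁻¹) ^ (ArithmeticFunction.cardFactors (k:ℕ))
        ≤ (1 - ((j : ℝ) + 2)⁻¹) ^ N :=
      pow_le_pow_of_le_one hbase0 (by linarith) hc
    rw [hval] at hk
    linarith [hk, this, hN]
  have hkle : (k : ℕ) ≤ (j + 2) ^ N := by
    calc (k : ℕ) ≤ (j + 2) ^ (ArithmeticFunction.cardFactors (k:ℕ)) :=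
          smooth_le_pow j (k : ℕ) k.ne_zero hsm
      _ ≤ (j + 2) ^ N := Nat.pow_le_pow_right (by omega) hΩ.le
  exact hkle

lemma wA_tendsto_one (k : ℕ+) : Filter.Tendsto (fun j => wA j k) Filter.atTop (𝓝 1) := by
  classical
  have hbase : Filter.Tendsto (fun j : ℕ => 1 - ((j : ℝ) + 2)⁻¹) Filter.atTop (𝓝 1) := by
    have h1 : Filter.Tendsto (fun j : ℕ => ((j : ℝ) + 2)) Filter.atTop Filter.atTop :=
      Filter.tendsto_atTop_add_const_right _ 2 tendsto_natCast_atTop_atTop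
    have h2 : Filter.Tendsto (fun j : ℕ => ((j : ℝ) + 2)⁻¹) Filter.atTop (𝓝 0) :=
      Filter.Tendsto.comp tendsto_inv_atTop_zero h1
    have := Filter.Tendsto.const_sub (1:ℝ) h2
    simpa using this
  have hR : Filter.Tendsto (fun j => wR j k) Filter.atTop (𝓝 1) := by
    have hpow : Filter.Tendsto
        (fun j : ℕ => (1 - ((j : ℝ) + 2)⁻¹) ^ (ArithmeticFunction.cardFactors (k:ℕ)))
        Filter.atTop (𝓝 1) := by
      have := hbase.pow (ArithmeticFunction.cardFactors (k:ℕ))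
      simpa using this
    apply hpow.congr'
    filter_upwards [Filter.eventually_ge_atTop (k : ℕ)] with j hj
    have hsm : smoothP j k := by
      intro p hp hd
      have := Nat.le_of_dvd k.pos hd
      omega
    rw [wR, if_pos hsm]
  have := (Complex.continuous_ofReal.tendsto 1).comp hR
  exact this

lemma diag_norm_le (w : ℕ+ → ℂ) (C : ℝ) (hw : ∀ k, ‖w k‖ ≤ C) (hC : 0 ≤ C) :
    ‖diag w C hw‖ ≤ C :=
  LinearMap.mkContinuous_norm_le _ hC _

end HankelAux

set_option maxHeartbeats 4000000

open HankelAux Filter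
open scoped Topology

/-- given a bounded multiplicative Hankel operator `M(α)`, the rule
`m**(I* a) := (α, a) = ∑ α(n) a(n)` extends to a well-defined `m** ∈ ℳ₀**` with
`‖m**‖ ≤ ‖M(α)‖` and `I**(m**) = α`. -/
theorem bounded_hankel_gives_bidual_element
    (S₀ : Submodule ℂ (H →L[ℂ] H))
    (hS₀ : (S₀ : Set (H →L[ℂ] H)) = {T | (∃ α, IsHankel T α) ∧ IsCompactOperator T})
    (I : ↥S₀ →L[ℂ] H)
    (hI : ∀ (T : ↥S₀) (α : ℕ+ → ℂ), IsHankel T.val α → ((I T : ℕ+ → ℂ) = α))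
    (α : ℕ+ → ℂ) (T : H →L[ℂ] H) (hT : IsHankel T α) :
    ∃ mss : NormedSpace.Dual ℂ (NormedSpace.Dual ℂ ↥S₀), ‖mss‖ ≤ ‖T‖ ∧
      ∀ (a : H) (φ : NormedSpace.Dual ℂ ↥S₀),
        (∀ T' : ↥S₀, φ T' = ∑' n : ℕ+, (I T' : ℕ+ → ℂ) n * a n) →
        mss φ = ∑' n : ℕ+, α n * a n := by
  classical
  obtain ⟨x0, hx0⟩ : ∃ x0 : H, ⇑x0 = α :=
    ⟨T (lp.single 2 1 1), funext fun m => by simpa using hT 1 m⟩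
  have sumA : ∀ a : H, Summable fun n : ℕ+ => α n * a n := fun a => by
    rw [← hx0]; exact pairSummable x0 a
  set D : ℕ → H →L[ℂ] H := fun j => diag (wA j) 1 (wA_norm_le_one j) with hD
  set S : ℕ → H →L[ℂ] H := fun j => (D j).comp (T.comp (D j)) with hS
  have hDop : ∀ j, ‖D j‖ ≤ 1 := fun j => diag_norm_le _ _ _ zero_le_one
  have hSnorm : ∀ j, ‖S j‖ ≤ ‖T‖ := by
    intro j
    calc ‖S j‖ ≤ ‖D j‖ * ‖T.comp (D j)‖ := ContinuousLinearMap.opNorm_comp_le _ _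
      _ ≤ ‖D j‖ * (‖T‖ * ‖D j‖) :=
          mul_le_mul_of_nonneg_left (ContinuousLinearMap.opNorm_comp_le _ _) (norm_nonneg _)
      _ ≤ 1 * (‖T‖ * 1) := by
          have h1 := hDop j
          have h2 := norm_nonneg (D j)
          have h3 := norm_nonneg T
          have h4 : ‖T‖ * ‖D j‖ ≤ ‖T‖ * 1 := mul_le_mul_of_nonneg_left h1 h3
          have h5 : ‖D j‖ * (‖T‖ * ‖D j‖) ≤ 1 * (‖T‖ * ‖D j‖) :=
            mul_le_mul_of_nonneg_right h1 (mul_nonneg h3 h2)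
          have h6 : 1 * (‖T‖ * ‖D j‖) ≤ 1 * (‖T‖ * 1) := by
            rw [one_mul, one_mul]; exact h4
          linarith
      _ = ‖T‖ := by ring
  have hDsingle : ∀ (j : ℕ) (n : ℕ+), D j (lp.single 2 n 1) = wA j n • lp.single 2 n 1 := by
    intro j n
    refine lp.ext (funext fun m => ?_)
    rw [hD]
    rw [diag_apply, lp.coeFn_smul, Pi.smul_apply, smul_eq_mul, single_one_apply]
    by_cases h : m = n
    · subst h; simp
    · simp [h]
  have hSH : ∀ j, IsHankel (S j) (fun k => wA j k * α k) := by
    intro j n m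
    show (D j (T (D j (lp.single 2 n 1))) : ℕ+ → ℂ) m = _
    rw [hDsingle j n, map_smul, diag_apply, lp.coeFn_smul, Pi.smul_apply, smul_eq_mul,
      hT n m, ← mul_assoc, mul_comm (wA j m) (wA j n), ← wA_mul]
  have hScpt : ∀ j, IsCompactOperator ⇑(S j) := by
    intro j
    have hc := isCompactOperator_diag (wA_norm_le_one j) (wA_tendsto_cofinite j)
    have h1 : ⇑(S j) = ⇑(D j) ∘ ⇑(T.comp (D j)) := rfl
    rw [h1]
    exact hc.comp_clm (T.comp (D j))
  have hSmem : ∀ j, S j ∈ S₀ := by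
    intro j
    have : S j ∈ (S₀ : Set (H →L[ℂ] H)) := by
      rw [hS₀]; exact ⟨⟨_, hSH j⟩, hScpt j⟩
    exact this
  have hIE : ∀ j, ⇑(I ⟨S j, hSmem j⟩) = fun k => wA j k * α k := fun j => hI _ _ (hSH j)
  have hEnorm : ∀ j, ‖(⟨S j, hSmem j⟩ : ↥S₀)‖ ≤ ‖T‖ := fun j => hSnorm j
  -- key norm estimate
  have key : ∀ (a : H) (φ : NormedSpace.Dual ℂ ↥S₀),
      (∀ T' : ↥S₀, φ T' = ∑' n : ℕ+, (I T' : ℕ+ → ℂ) n * a n) →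
      ‖∑' n : ℕ+, α n * a n‖ ≤ ‖T‖ * ‖φ‖ := by
    intro a φ hφ
    have hterm : ∀ j : ℕ, φ ⟨S j, hSmem j⟩ = ∑' n : ℕ+, wA j n * (α n * a n) := by
      intro j
      rw [hφ ⟨S j, hSmem j⟩]
      refine tsum_congr fun n => ?_
      rw [congrFun (hIE j) n]
      ring
    have hb : ∀ j : ℕ, ‖φ ⟨S j, hSmem j⟩‖ ≤ ‖T‖ * ‖φ‖ := by
      intro j
      calc ‖φ ⟨S j, hSmem j⟩‖ ≤ ‖φ‖ * ‖(⟨S j, hSmem j⟩ : ↥S₀)‖ := φ.le_opNorm _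
        _ ≤ ‖φ‖ * ‖T‖ := mul_le_mul_of_nonneg_left (hEnorm j) (norm_nonneg _)
        _ = ‖T‖ * ‖φ‖ := mul_comm _ _
    have hsum : Summable fun n : ℕ+ => ‖α n * a n‖ := by
      rw [← hx0]; exact normSummable x0 a
    have hlim : Tendsto (fun j : ℕ => ∑' n : ℕ+, wA j n * (α n * a n)) atTop
        (𝓝 (∑' n : ℕ+, α n * a n)) := by
      refine tendsto_tsum_of_dominated_convergence hsum (fun n => ?_)
        (Eventually.of_forall fun j n => ?_)
      · have := (wA_tendsto_one n).mul_const (α n * a n)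
        simpa using this
      · calc ‖wA j n * (α n * a n)‖ = ‖wA j n‖ * ‖α n * a n‖ := norm_mul _ _
          _ ≤ 1 * ‖α n * a n‖ :=
              mul_le_mul_of_nonneg_right (wA_norm_le_one j n) (norm_nonneg _)
          _ = ‖α n * a n‖ := one_mul _
    exact le_of_tendsto hlim.norm (Eventually.of_forall fun j => by
      rw [← hterm j]; exact hb j)
  -- well-definedness
  have wd : ∀ a b : H,
      (∀ T' : ↥S₀, (∑' n : ℕ+, (I T' : ℕ+ → ℂ) n * a n)
        = ∑' n : ℕ+, (I T' : ℕ+ → ℂ) n * b n) →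
      (∑' n : ℕ+, α n * a n) = ∑' n : ℕ+, α n * b n := by
    intro a b hab
    have h0 : ∀ T' : ↥S₀, (0 : NormedSpace.Dual ℂ ↥S₀) T'
        = ∑' n : ℕ+, (I T' : ℕ+ → ℂ) n * (a - b) n := by
      intro T'
      have hs : (∑' n : ℕ+, (I T' : ℕ+ → ℂ) n * (a - b) n)
          = (∑' n : ℕ+, (I T' : ℕ+ → ℂ) n * a n)
            - ∑' n : ℕ+, (I T' : ℕ+ → ℂ) n * b n := by
        rw [← Summable.tsum_sub (pairSummable (I T') a) (pairSummable (I T') b)]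
        refine tsum_congr fun n => ?_
        rw [lp.coeFn_sub, Pi.sub_apply]
        ring
      rw [hs, hab T', sub_self]
      rfl
    have hk := key (a - b) 0 h0
    rw [norm_zero, mul_zero] at hk
    have hsplit : (∑' n : ℕ+, α n * (a - b) n)
        = (∑' n : ℕ+, α n * a n) - ∑' n : ℕ+, α n * b n := by
      rw [← Summable.tsum_sub (sumA a) (sumA b)]
      refine tsum_congr fun n => ?_
      rw [lp.coeFn_sub, Pi.sub_apply]
      ring
    rw [hsplit] at hk
    exact sub_eq_zero.mp (norm_le_zero_iff.mp hk)
  -- the subspace of functionals of the form `I* a`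
  set P : Submodule ℂ (NormedSpace.Dual ℂ ↥S₀) :=
    { carrier := {φ | ∃ a : H, ∀ T' : ↥S₀, φ T' = ∑' n : ℕ+, (I T' : ℕ+ → ℂ) n * a n}
      add_mem' := by
        rintro φ ψ ⟨a, hA⟩ ⟨b, hB⟩
        refine ⟨a + b, fun T' => ?_⟩
        rw [show (φ + ψ) T' = φ T' + ψ T' from rfl, hA T', hB T',
          ← Summable.tsum_add (pairSummable (I T') a) (pairSummable (I T') b)]
        refine tsum_congr fun n => ?_
        rw [lp.coeFn_add, Pi.add_apply]
        ring
      zero_mem' := ⟨0, fun T' => by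
        simp only [ContinuousLinearMap.zero_apply, lp.coeFn_zero, Pi.zero_apply, mul_zero,
          tsum_zero]
        rfl⟩
      smul_mem' := by
        rintro c φ ⟨a, hA⟩
        refine ⟨c • a, fun T' => ?_⟩
        rw [show (c • φ) T' = c • φ T' from rfl, hA T', smul_eq_mul, ← tsum_mul_left]
        refine tsum_congr fun n => ?_
        rw [lp.coeFn_smul, Pi.smul_apply, smul_eq_mul]
        ring } with hP
  have hPmem : ∀ φ : NormedSpace.Dual ℂ ↥S₀,
      φ ∈ P ↔ ∃ a : H, ∀ T' : ↥S₀, φ T' = ∑' n : ℕ+, (I T' : ℕ+ → ℂ) n * a n :=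
    fun φ => Iff.rfl
  let wit : ↥P → H := fun ψ => Classical.choose ((hPmem ψ.1).mp ψ.2)
  have hwit : ∀ (ψ : ↥P) (T' : ↥S₀), (ψ : NormedSpace.Dual ℂ ↥S₀) T'
      = ∑' n : ℕ+, (I T' : ℕ+ → ℂ) n * (wit ψ) n :=
    fun ψ => Classical.choose_spec ((hPmem ψ.1).mp ψ.2)
  let g0 : ↥P →ₗ[ℂ] ℂ :=
    { toFun := fun ψ => ∑' n : ℕ+, α n * (wit ψ) n
      map_add' := by
        intro ψ χ
        show (∑' n : ℕ+, α n * (wit (ψ + χ)) n)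
          = (∑' n : ℕ+, α n * (wit ψ) n) + ∑' n : ℕ+, α n * (wit χ) n
        have h1 : ∀ T' : ↥S₀, (∑' n : ℕ+, (I T' : ℕ+ → ℂ) n * (wit (ψ + χ)) n)
            = ∑' n : ℕ+, (I T' : ℕ+ → ℂ) n * (wit ψ + wit χ) n := by
          intro T'
          rw [← hwit (ψ + χ) T', Submodule.coe_add, show ((ψ : NormedSpace.Dual ℂ ↥S₀) + χ) T' = (ψ : NormedSpace.Dual ℂ ↥S₀) T' + (χ : NormedSpace.Dual ℂ ↥S₀) T' from rfl,
            hwit ψ T', hwit χ T',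
            ← Summable.tsum_add (pairSummable (I T') (wit ψ)) (pairSummable (I T') (wit χ))]
          refine tsum_congr fun n => ?_
          rw [lp.coeFn_add, Pi.add_apply]
          ring
        have h2 := wd _ _ h1
        rw [h2, ← Summable.tsum_add (sumA (wit ψ)) (sumA (wit χ))]
        refine tsum_congr fun n => ?_
        rw [lp.coeFn_add, Pi.add_apply]
        ring
      map_smul' := by
        intro c ψ
        show (∑' n : ℕ+, α n * (wit (c • ψ)) n) = c * ∑' n : ℕ+, α n * (wit ψ) n
        have h1 : ∀ T' : ↥S₀, (∑' n : ℕ+, (I T' : ℕ+ → ℂ) n * (wit (c • ψ)) n)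
            = ∑' n : ℕ+, (I T' : ℕ+ → ℂ) n * (c • wit ψ) n := by
          intro T'
          calc (∑' n : ℕ+, (I T' : ℕ+ → ℂ) n * (wit (c • ψ)) n)
              = ((c • ψ : ↥P) : NormedSpace.Dual ℂ ↥S₀) T' := (hwit (c • ψ) T').symm
            _ = c * (ψ : NormedSpace.Dual ℂ ↥S₀) T' := by
                rw [Submodule.coe_smul, show (c • (ψ : NormedSpace.Dual ℂ ↥S₀)) T' = c • (ψ : NormedSpace.Dual ℂ ↥S₀) T' from rfl, smul_eq_mul]
            _ = c * ∑' n : ℕ+, (I T' : ℕ+ → ℂ) n * (wit ψ) n := by rw [hwit ψ T']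
            _ = ∑' n : ℕ+, c * ((I T' : ℕ+ → ℂ) n * (wit ψ) n) := (tsum_mul_left).symm
            _ = ∑' n : ℕ+, (I T' : ℕ+ → ℂ) n * (c • wit ψ) n := by
                refine tsum_congr fun n => ?_
                rw [lp.coeFn_smul, Pi.smul_apply, smul_eq_mul]
                ring
        have h2 := wd _ _ h1
        calc (∑' n : ℕ+, α n * (wit (c • ψ)) n)
            = ∑' n : ℕ+, α n * (c • wit ψ) n := h2
          _ = ∑' n : ℕ+, c * (α n * (wit ψ) n) := by
              refine tsum_congr fun n => ?_
              rw [lp.coeFn_smul, Pi.smul_apply, smul_eq_mul]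
              ring
          _ = c * ∑' n : ℕ+, α n * (wit ψ) n := tsum_mul_left }
  have hg0b : ∀ ψ : ↥P, ‖g0 ψ‖ ≤ ‖T‖ * ‖ψ‖ := fun ψ => key (wit ψ) ψ.1 (hwit ψ)
  obtain ⟨g, hg, hgnorm⟩ := exists_extension_norm_eq P (LinearMap.mkContinuous g0 ‖T‖ hg0b)
  refine ⟨g, ?_, ?_⟩
  · refine (le_of_eq hgnorm).trans ?_
    exact LinearMap.mkContinuous_norm_le g0 (norm_nonneg T) hg0b
  · intro a φ hφ
    have hmem : φ ∈ P := (hPmem φ).mpr ⟨a, hφ⟩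
    calc g φ = LinearMap.mkContinuous g0 ‖T‖ hg0b ⟨φ, hmem⟩ := hg ⟨φ, hmem⟩
      _ = ∑' n : ℕ+, α n * (wit ⟨φ, hmem⟩) n := rfl
      _ = ∑' n : ℕ+, α n * a n := by
          refine wd _ _ fun T' => ?_
          rw [← hwit ⟨φ, hmem⟩ T']
          exact hφ T'
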